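/- Let Γ be a metric graph with model (G,ℓ) and D a divisor on Γ. For every function f : V → ℝ there exists a unique rational function f̂ : Γ → ℝ extending f such that D + div(f̂) is G-admissible. -/

import Mathlib

/-- A model `(G, ℓ)` of a metric graph `Γ`: a finite (multi)graph `G = (V, E)` given by
its endpoint maps `src, tgt : E → V`, together with positive edge lengths `ℓ : E → ℝ`.
The metric graph `Γ` is obtained by plugging an interval `[0, ℓ e]` between the two
extremities of each edge `e`; a point of `Γ` is either a vertex or an interior point of
an edge `e`, recorded by its parameter `t ∈ (0, ℓ e)`. -/
structure MetricGraph where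
  V : Type
  E : Type
  fintypeV : Fintype V
  decEqV : DecidableEq V
  fintypeE : Fintype E
  src : E → V
  tgt : E → V
  len : E → ℝ
  len_pos : ∀ e, 0 < len e

attribute [instance] MetricGraph.fintypeV MetricGraph.decEqV MetricGraph.fintypeE

/-- A divisor on the metric graph `Γ`: an integer coefficient `vtx v` at each vertex `v`,
and an integer coefficient `inter e t` at the interior point of edge `e` with parameter
`t`; the interior coefficients are supported on finitely many points, all lying in the
open interval `(0, ℓ e)`. -/
structure Divisor (Γ : MetricGraph) where
  vtx : Γ.V → ℤ
  inter : Γ.E → ℝ → ℤ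
  finite_supp : ∀ e, {t : ℝ | inter e t ≠ 0}.Finite
  supp_mem : ∀ e t, inter e t ≠ 0 → t ∈ Set.Ioo 0 (Γ.len e)

/-- A divisor `D` is `G`-admissible if each edge interior contains at most one point of
its support, and the coefficient of `D` there equals `1`. -/
def Divisor.GAdmissible {Γ : MetricGraph} (D : Divisor Γ) : Prop :=
  ∀ e t₁ t₂, D.inter e t₁ ≠ 0 → D.inter e t₂ ≠ 0 → t₁ = t₂ ∧ D.inter e t₁ = 1

/-- The total interior degree of `D` on the edge `e`. -/
noncomputable def Divisor.interDeg {Γ : MetricGraph} (D : Divisor Γ) (e : Γ.E) : ℤ :=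
  ∑ᶠ t : ℝ, D.inter e t

/-- The degree of the divisor `D`. -/
noncomputable def Divisor.deg {Γ : MetricGraph} (D : Divisor Γ) : ℤ :=
  (∑ v, D.vtx v) + ∑ e, D.interDeg e

open Finset in
/-- `deg(D_I)`: the degree of the restriction of `D` to `Γ_I`, the union of the vertices
in `I` and the edges joining two vertices of `I`. -/
noncomputable def Divisor.degRestr {Γ : MetricGraph} (D : Divisor Γ) (I : Finset Γ.V) : ℤ :=
  (∑ v ∈ I, D.vtx v) +
    ∑ e ∈ Finset.univ.filter (fun e => Γ.src e ∈ I ∧ Γ.tgt e ∈ I), D.interDeg e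

/-- `e(I, I^c)`: the number of edges of `G` between `I` and its complement. -/
noncomputable def crossE (Γ : MetricGraph) (I : Finset Γ.V) : ℕ :=
  {e : Γ.E | ¬((Γ.src e ∈ I) ↔ (Γ.tgt e ∈ I))}.ncard

/-- `e_D(I, I^c)`: the number of edges of the spanning subgraph `G_D` (edges with no
point of the support of `D` in their interior) between `I` and its complement. -/
noncomputable def crossED {Γ : MetricGraph} (D : Divisor Γ) (I : Finset Γ.V) : ℕ :=
  {e : Γ.E | (¬((Γ.src e ∈ I) ↔ (Γ.tgt e ∈ I))) ∧ ∀ t, D.inter e t = 0}.ncard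

/-- `g` is piecewise affine with integer slopes on `[0, L]`: there are breakpoints
`0 = t 0 < t 1 < ⋯ < t m = L` and integer slopes `s i` such that `g` is affine of slope
`s i` on `[t i, t (i+1)]`. -/
def PWAffineZ (g : ℝ → ℝ) (L : ℝ) : Prop :=
  ∃ (m : ℕ) (t : ℕ → ℝ) (s : ℕ → ℤ), 0 < m ∧ t 0 = 0 ∧ t m = L ∧
    (∀ i j, i < j → j ≤ m → t i < t j) ∧
    ∀ i, i < m → ∀ x, t i ≤ x → x ≤ t (i + 1) →
      g x = g (t i) + (s i : ℝ) * (x - t i)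

/-- A rational function on the metric graph `Γ`: a value at each vertex, and on each edge
`e` a continuous piecewise affine function with integer slopes on `[0, ℓ e]`, matching
the vertex values at the extremities. -/
structure RatFn (Γ : MetricGraph) where
  vtx : Γ.V → ℝ
  edge : Γ.E → ℝ → ℝ
  edge_src : ∀ e, edge e 0 = vtx (Γ.src e)
  edge_tgt : ∀ e, edge e (Γ.len e) = vtx (Γ.tgt e)
  pw : ∀ e, PWAffineZ (edge e) (Γ.len e)

/-- `g` has slope `s` on a left neighborhood of `t`. -/
def HasLeftSlope (g : ℝ → ℝ) (t : ℝ) (s : ℤ) : Prop :=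
  ∃ δ > 0, ∀ x ∈ Set.Ioo (t - δ) t, g x = g t + (s : ℝ) * (x - t)

/-- `g` has slope `s` on a right neighborhood of `t`. -/
def HasRightSlope (g : ℝ → ℝ) (t : ℝ) (s : ℤ) : Prop :=
  ∃ δ > 0, ∀ x ∈ Set.Ioo t (t + δ), g x = g t + (s : ℝ) * (x - t)

/-- The order of vanishing of `g` at the interior point `t` is `n`: the sum of the
incoming slopes, i.e. `n = s⁻ - s⁺` for the one-sided slopes `s⁻, s⁺` at `t`. -/
def OrdAt (g : ℝ → ℝ) (t : ℝ) (n : ℤ) : Prop :=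
  ∃ sl sr : ℤ, HasLeftSlope g t sl ∧ HasRightSlope g t sr ∧ n = sl - sr

/-- The coefficient of the divisor `D + div(h)` at the interior point of edge `e` with
parameter `t` is `c`. -/
def CoeffAt {Γ : MetricGraph} (D : Divisor Γ) (h : RatFn Γ) (e : Γ.E) (t : ℝ) (c : ℤ) :
    Prop :=
  ∃ n : ℤ, OrdAt (h.edge e) t n ∧ c = D.inter e t + n

/-- `D + div(h)` is `G`-admissible: on the interior of each edge there is at most one
point with nonzero coefficient, and there the coefficient is `1`. -/
def AdmissibleSum {Γ : MetricGraph} (D : Divisor Γ) (h : RatFn Γ) : Prop :=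
  ∀ e, ∀ t₁ t₂, t₁ ∈ Set.Ioo 0 (Γ.len e) → t₂ ∈ Set.Ioo 0 (Γ.len e) →
    ∀ c₁ c₂ : ℤ, CoeffAt D h e t₁ c₁ → CoeffAt D h e t₂ c₂ →
      c₁ ≠ 0 → c₂ ≠ 0 → t₁ = t₂ ∧ c₁ = 1

/-! ### Auxiliary machinery: explicit piecewise linear functions -/

section AuxPWL

/-- The basic piecewise linear function with kinks at the points of `S`:
`y ↦ A + σ y + ∑_{u ∈ S} w(u) · (y - u)⁺`. -/
noncomputable def pwl (A : ℝ) (σ : ℤ) (S : Finset ℝ) (w : ℝ → ℤ) (y : ℝ) : ℝ :=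
  A + (σ : ℝ) * y + ∑ u ∈ S, (w u : ℝ) * max (y - u) 0

lemma pwl_eval_right (A : ℝ) (σ : ℤ) (S : Finset ℝ) (w : ℝ → ℤ) {p y : ℝ}
    (hp : p ≤ y) (hc : ∀ u ∈ S, u ≤ p ∨ y ≤ u) :
    pwl A σ S w y = pwl A σ S w p
      + ((σ + ∑ u ∈ S.filter (fun u => u ≤ p), w u : ℤ) : ℝ) * (y - p) := by
  have key : (∑ u ∈ S, (w u : ℝ) * max (y - u) 0) - ∑ u ∈ S, (w u : ℝ) * max (p - u) 0
      = (∑ u ∈ S, if u ≤ p then (w u : ℝ) else 0) * (y - p) := by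
    rw [Finset.sum_mul, ← Finset.sum_sub_distrib]
    refine Finset.sum_congr rfl fun u hu => ?_
    rcases le_or_gt u p with h | h
    · rw [if_pos h, max_eq_left (by linarith), max_eq_left (by linarith)]; ring
    · have hyu : y ≤ u := (hc u hu).resolve_left (not_le.2 h)
      rw [if_neg (not_le.2 h), max_eq_right (by linarith), max_eq_right (by linarith)]; ring
  unfold pwl
  push_cast
  rw [Finset.sum_filter]
  linear_combination key

lemma pwl_eval_left (A : ℝ) (σ : ℤ) (S : Finset ℝ) (w : ℝ → ℤ) {y q : ℝ}
    (hy : y ≤ q) (hc : ∀ u ∈ S, u ≤ y ∨ q ≤ u) :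
    pwl A σ S w y = pwl A σ S w q
      + ((σ + ∑ u ∈ S.filter (fun u => u < q), w u : ℤ) : ℝ) * (y - q) := by
  rcases eq_or_lt_of_le hy with rfl | hyq
  · simp
  · have key : (∑ u ∈ S, (w u : ℝ) * max (y - u) 0) - ∑ u ∈ S, (w u : ℝ) * max (q - u) 0
        = (∑ u ∈ S, if u < q then (w u : ℝ) else 0) * (y - q) := by
      rw [Finset.sum_mul, ← Finset.sum_sub_distrib]
      refine Finset.sum_congr rfl fun u hu => ?_
      rcases hc u hu with h | h
      · rw [if_pos (lt_of_le_of_lt h hyq), max_eq_left (by linarith),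
          max_eq_left (by linarith)]; ring
      · rw [if_neg (not_lt.2 h), max_eq_right (by linarith), max_eq_right (by linarith)]; ring
    unfold pwl
    push_cast
    rw [Finset.sum_filter]
    linear_combination key

lemma pwl_hasRightSlope (A : ℝ) (σ : ℤ) (S : Finset ℝ) (w : ℝ → ℤ) (t : ℝ) :
    HasRightSlope (pwl A σ S w) t (σ + ∑ u ∈ S.filter (fun u => u ≤ t), w u) := by
  classical
  by_cases hne : (S.filter (fun u => t < u)).Nonempty
  · have hmin : t < (S.filter (fun u => t < u)).min' hne :=
      (Finset.mem_filter.1 ((S.filter (fun u => t < u)).min'_mem hne)).2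
    refine ⟨(S.filter (fun u => t < u)).min' hne - t, by linarith, fun y hy => ?_⟩
    refine pwl_eval_right A σ S w (le_of_lt hy.1) fun u hu => ?_
    rcases le_or_gt u t with h | h
    · exact Or.inl h
    · have h2 : (S.filter (fun u => t < u)).min' hne ≤ u :=
        Finset.min'_le _ u (show u ∈ S.filter (fun v => t < v) from Finset.mem_filter.2 ⟨hu, h⟩)
      have h3 := hy.2
      right; simp only [Set.mem_Ioo] at hy; linarith [hy.2]
  · refine ⟨1, one_pos, fun y hy => ?_⟩
    refine pwl_eval_right A σ S w (le_of_lt hy.1) fun u hu => ?_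
    left
    by_contra h
    exact hne ⟨u, Finset.mem_filter.2 ⟨hu, not_le.1 h⟩⟩

lemma pwl_hasLeftSlope (A : ℝ) (σ : ℤ) (S : Finset ℝ) (w : ℝ → ℤ) (t : ℝ) :
    HasLeftSlope (pwl A σ S w) t (σ + ∑ u ∈ S.filter (fun u => u < t), w u) := by
  classical
  by_cases hne : (S.filter (fun u => u < t)).Nonempty
  · have hmax : (S.filter (fun u => u < t)).max' hne < t :=
      (Finset.mem_filter.1 ((S.filter (fun u => u < t)).max'_mem hne)).2
    refine ⟨t - (S.filter (fun u => u < t)).max' hne, by linarith, fun y hy => ?_⟩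
    refine pwl_eval_left A σ S w (le_of_lt hy.2) fun u hu => ?_
    rcases lt_or_ge u t with h | h
    · have h2 : u ≤ (S.filter (fun u => u < t)).max' hne :=
        Finset.le_max' _ u (show u ∈ S.filter (fun v => v < t) from Finset.mem_filter.2 ⟨hu, h⟩)
      left; simp only [Set.mem_Ioo] at hy; linarith [hy.1]
    · exact Or.inr h
  · refine ⟨1, one_pos, fun y hy => ?_⟩
    refine pwl_eval_left A σ S w (le_of_lt hy.2) fun u hu => ?_
    right
    by_contra h
    exact hne ⟨u, Finset.mem_filter.2 ⟨hu, not_le.1 h⟩⟩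

lemma hasRightSlope_unique {g : ℝ → ℝ} {t : ℝ} {s₁ s₂ : ℤ}
    (h₁ : HasRightSlope g t s₁) (h₂ : HasRightSlope g t s₂) : s₁ = s₂ := by
  obtain ⟨δ₁, hδ₁, H₁⟩ := h₁
  obtain ⟨δ₂, hδ₂, H₂⟩ := h₂
  have hmin : 0 < min δ₁ δ₂ := lt_min hδ₁ hδ₂
  have h₁' := H₁ (t + min δ₁ δ₂ / 2)
    ⟨by linarith, by linarith [min_le_left δ₁ δ₂]⟩
  have h₂' := H₂ (t + min δ₁ δ₂ / 2)
    ⟨by linarith, by linarith [min_le_right δ₁ δ₂]⟩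
  have key : (s₁ : ℝ) * (min δ₁ δ₂ / 2) = s₂ * (min δ₁ δ₂ / 2) := by
    have e1 : t + min δ₁ δ₂ / 2 - t = min δ₁ δ₂ / 2 := by ring
    rw [e1] at h₁' h₂'
    linarith
  have hne : (min δ₁ δ₂ / 2 : ℝ) ≠ 0 := ne_of_gt (by linarith)
  have := mul_right_cancel₀ hne key
  exact_mod_cast this

lemma hasLeftSlope_unique {g : ℝ → ℝ} {t : ℝ} {s₁ s₂ : ℤ}
    (h₁ : HasLeftSlope g t s₁) (h₂ : HasLeftSlope g t s₂) : s₁ = s₂ := by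
  obtain ⟨δ₁, hδ₁, H₁⟩ := h₁
  obtain ⟨δ₂, hδ₂, H₂⟩ := h₂
  have hmin : 0 < min δ₁ δ₂ := lt_min hδ₁ hδ₂
  have h₁' := H₁ (t - min δ₁ δ₂ / 2)
    ⟨by linarith [min_le_left δ₁ δ₂], by linarith⟩
  have h₂' := H₂ (t - min δ₁ δ₂ / 2)
    ⟨by linarith [min_le_right δ₁ δ₂], by linarith⟩
  have key : (s₁ : ℝ) * (-(min δ₁ δ₂ / 2)) = s₂ * (-(min δ₁ δ₂ / 2)) := by
    have e1 : t - min δ₁ δ₂ / 2 - t = -(min δ₁ δ₂ / 2) := by ring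
    rw [e1] at h₁' h₂'
    linarith
  have hne : (-(min δ₁ δ₂ / 2) : ℝ) ≠ 0 := by
    have : (0:ℝ) < min δ₁ δ₂ / 2 := by linarith
    intro h; rw [neg_eq_zero] at h; linarith
  have := mul_right_cancel₀ hne key
  exact_mod_cast this

lemma ordAt_unique {g : ℝ → ℝ} {t : ℝ} {n₁ n₂ : ℤ}
    (h₁ : OrdAt g t n₁) (h₂ : OrdAt g t n₂) : n₁ = n₂ := by
  obtain ⟨a₁, b₁, ha₁, hb₁, rfl⟩ := h₁
  obtain ⟨a₂, b₂, ha₂, hb₂, rfl⟩ := h₂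
  rw [hasLeftSlope_unique ha₁ ha₂, hasRightSlope_unique hb₁ hb₂]

lemma sum_filter_le_sub_lt (S : Finset ℝ) (w : ℝ → ℤ) (t : ℝ) :
    (∑ u ∈ S.filter (fun u => u < t), w u) - (∑ u ∈ S.filter (fun u => u ≤ t), w u)
      = - (if t ∈ S then w t else 0) := by
  classical
  rw [Finset.sum_filter, Finset.sum_filter, ← Finset.sum_sub_distrib]
  have h1 : ∀ u ∈ S, (if u < t then w u else 0) - (if u ≤ t then w u else 0)
      = -(if u = t then w u else 0) := by
    intro u _
    rcases lt_trichotomy u t with h | rfl | h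
    · rw [if_pos h, if_pos h.le, if_neg h.ne]; ring
    · rw [if_neg (lt_irrefl u), if_pos le_rfl, if_pos rfl]; ring
    · rw [if_neg (not_lt.2 h.le), if_neg (not_le.2 h), if_neg (ne_of_gt h)]; ring
  rw [Finset.sum_congr rfl h1, Finset.sum_neg_distrib, Finset.sum_ite_eq' S t w]

lemma pwl_ordAt (A : ℝ) (σ : ℤ) (S : Finset ℝ) (w : ℝ → ℤ) (t : ℝ) :
    OrdAt (pwl A σ S w) t (-(if t ∈ S then w t else 0)) := by
  classical
  refine ⟨_, _, pwl_hasLeftSlope A σ S w t, pwl_hasRightSlope A σ S w t, ?_⟩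
  have := sum_filter_le_sub_lt S w t
  rw [← this]; ring

lemma pwl_pwaffine (A : ℝ) (σ : ℤ) (S : Finset ℝ) (w : ℝ → ℤ) {L : ℝ} (hL : 0 < L)
    (hS : ∀ u ∈ S, 0 < u ∧ u ≤ L) : PWAffineZ (pwl A σ S w) L := by
  classical
  set T : Finset ℝ := insert 0 (insert L (S.filter (fun u => u < L))) with hTdef
  set l := T.sort (· ≤ ·) with hldef
  have hlen : l.length = T.card := Finset.length_sort _
  have h0T : (0:ℝ) ∈ T := Finset.mem_insert_self _ _
  have hLT : L ∈ T := by
    rw [hTdef]; exact Finset.mem_insert_of_mem (Finset.mem_insert_self _ _)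
  have hTmem : ∀ u ∈ T, 0 ≤ u ∧ u ≤ L := by
    intro u hu
    rw [hTdef] at hu
    simp only [Finset.mem_insert, Finset.mem_filter] at hu
    rcases hu with rfl | huL | ⟨hu, _⟩
    · exact ⟨le_refl 0, hL.le⟩
    · exact ⟨huL ▸ hL.le, le_of_eq huL⟩
    · exact ⟨(hS u hu).1.le, (hS u hu).2⟩
  have hcard : 2 ≤ T.card := by
    have hsub : ({0, L} : Finset ℝ) ⊆ T := by
      intro u hu
      rcases Finset.mem_insert.1 hu with rfl | hu'
      · exact h0T
      · rw [Finset.mem_singleton] at hu'; rw [hu']; exact hLT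
    calc 2 = ({0, L} : Finset ℝ).card := (Finset.card_pair (ne_of_lt hL)).symm
      _ ≤ T.card := Finset.card_le_card hsub
  have hmlen : T.card - 1 < l.length := by rw [hlen]; omega
  have hget : ∀ i (h : i < l.length), l.getD i 0 = l[i] := fun i h => List.getD_eq_getElem l 0 h
  have hstrict : ∀ i j, i < j → j < l.length → l.getD i 0 < l.getD j 0 := by
    intro i j hij hj
    rw [hget i (hij.trans hj), hget j hj]
    exact List.pairwise_iff_getElem.1 (Finset.sortedLT_sort T).pairwise i j _ hj hij
  have hmono : ∀ i j, i ≤ j → j < l.length → l.getD i 0 ≤ l.getD j 0 := by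
    intro i j hij hj
    rcases eq_or_lt_of_le hij with rfl | h'
    · exact le_rfl
    · exact (hstrict i j h' hj).le
  have htmem : ∀ i, i < l.length → l.getD i 0 ∈ T := by
    intro i h
    rw [hget i h]
    exact (Finset.mem_sort _).1 (List.getElem_mem _)
  have ht0 : l.getD 0 0 = 0 := by
    obtain ⟨k, hk, hk0⟩ := List.mem_iff_getElem.1 ((Finset.mem_sort (α := ℝ) (· ≤ ·)).2 h0T)
    have hk' : k < l.length := by rw [hldef]; exact hk
    have hk0' : l.getD k 0 = 0 := by rw [hget k hk']; exact hk0
    refine le_antisymm ?_ (hTmem _ (htmem 0 (by omega))).1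
    calc l.getD 0 0 ≤ l.getD k 0 := hmono 0 k (Nat.zero_le k) hk'
      _ = 0 := hk0'
  have htm : l.getD (T.card - 1) 0 = L := by
    obtain ⟨k, hk, hkL⟩ := List.mem_iff_getElem.1 ((Finset.mem_sort (α := ℝ) (· ≤ ·)).2 hLT)
    have hk' : k < l.length := by rw [hldef]; exact hk
    have hkL' : l.getD k 0 = L := by rw [hget k hk']; exact hkL
    refine le_antisymm (hTmem _ (htmem _ hmlen)).2 ?_
    calc L = l.getD k 0 := hkL'.symm
      _ ≤ l.getD (T.card - 1) 0 := hmono k (T.card - 1) (by omega) hmlen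
  refine ⟨T.card - 1, fun i => l.getD i 0,
    fun i => σ + ∑ u ∈ S.filter (fun u => u ≤ l.getD i 0), w u,
    by omega, ht0, htm, ?_, ?_⟩
  · intro i j hij hjm
    exact hstrict i j hij (by omega)
  · intro i hi x hx1 hx2
    refine pwl_eval_right A σ S w hx1 fun u hu => ?_
    rcases eq_or_lt_of_le (hS u hu).2 with rfl | huL
    · right
      calc x ≤ l.getD (i+1) 0 := hx2
        _ ≤ u := (hTmem _ (htmem (i+1) (by omega))).2
    · have huT : u ∈ T := by
        rw [hTdef]
        exact Finset.mem_insert_of_mem (Finset.mem_insert_of_mem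
          (Finset.mem_filter.2 ⟨hu, huL⟩))
      obtain ⟨k, hk, hku⟩ := List.mem_iff_getElem.1 ((Finset.mem_sort (α := ℝ) (· ≤ ·)).2 huT)
      have hk' : k < l.length := by rw [hldef]; exact hk
      have hku' : l.getD k 0 = u := by rw [hget k hk']; exact hku
      rcases le_or_gt k i with h | h
      · left
        calc u = l.getD k 0 := hku'.symm
          _ ≤ l.getD i 0 := hmono k i h (by omega)
      · right
        calc x ≤ l.getD (i+1) 0 := hx2
          _ ≤ l.getD k 0 := hmono (i+1) k h hk'
          _ = u := hku'

end AuxPWL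

/-! ### The explicit admissible extension on one edge -/

section OneEdge

noncomputable def eC (L : ℝ) (Sd : Finset ℝ) (d : ℝ → ℤ) : ℝ :=
  ∑ u ∈ Sd, (d u : ℝ) * (L - u)

noncomputable def er (L a b : ℝ) (Sd : Finset ℝ) (d : ℝ → ℤ) : ℝ :=
  (b - a - eC L Sd d) / L

noncomputable def es (L a b : ℝ) (Sd : Finset ℝ) (d : ℝ → ℤ) : ℤ :=
  ⌈er L a b Sd d⌉

noncomputable def ex (L a b : ℝ) (Sd : Finset ℝ) (d : ℝ → ℤ) : ℝ :=
  (er L a b Sd d - es L a b Sd d + 1) * L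

noncomputable def ew (x : ℝ) (d : ℝ → ℤ) : ℝ → ℤ :=
  fun u => d u - if u = x then 1 else 0

noncomputable def eg (L a b : ℝ) (Sd : Finset ℝ) (d : ℝ → ℤ) : ℝ → ℝ :=
  pwl a (es L a b Sd d) (insert (ex L a b Sd d) Sd) (ew (ex L a b Sd d) d)

lemma ex_mem (L a b : ℝ) (Sd : Finset ℝ) (d : ℝ → ℤ) (hL : 0 < L) :
    0 < ex L a b Sd d ∧ ex L a b Sd d ≤ L := by
  have h1 : er L a b Sd d ≤ es L a b Sd d := Int.le_ceil _
  have h2 : (es L a b Sd d : ℝ) < er L a b Sd d + 1 := Int.ceil_lt_add_one _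
  unfold ex
  constructor
  · have : 0 < er L a b Sd d - es L a b Sd d + 1 := by linarith
    exact mul_pos this hL
  · have h3 : er L a b Sd d - es L a b Sd d + 1 ≤ 1 := by linarith
    nlinarith

lemma eg_zero {L a b : ℝ} {Sd : Finset ℝ} {d : ℝ → ℤ} (hL : 0 < L)
    (hSd : ∀ u ∈ Sd, 0 < u ∧ u < L) : eg L a b Sd d 0 = a := by
  unfold eg pwl
  rw [Finset.sum_eq_zero]
  · ring
  · intro u hu
    have hu0 : 0 < u := by
      rcases Finset.mem_insert.1 hu with rfl | hu'
      · exact (ex_mem L a b Sd d hL).1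
      · exact (hSd u hu').1
    rw [max_eq_right (by linarith), mul_zero]

lemma eg_len {L a b : ℝ} {Sd : Finset ℝ} {d : ℝ → ℤ} (hL : 0 < L)
    (hSd : ∀ u ∈ Sd, 0 < u ∧ u < L) (hd : ∀ u, u ∉ Sd → d u = 0) :
    eg L a b Sd d L = b := by
  classical
  unfold eg pwl
  have hmax : ∀ u ∈ insert (ex L a b Sd d) Sd,
      (ew (ex L a b Sd d) d u : ℝ) * max (L - u) 0
        = (d u : ℝ) * (L - u) - (if u = ex L a b Sd d then (L - u) else 0) := by
    intro u hu
    have huL : u ≤ L := by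
      rcases Finset.mem_insert.1 hu with rfl | hu'
      · exact (ex_mem L a b Sd d hL).2
      · exact (hSd u hu').2.le
    rw [max_eq_left (by linarith)]
    unfold ew
    split_ifs with h <;> push_cast <;> ring
  rw [Finset.sum_congr rfl hmax, Finset.sum_sub_distrib,
    Finset.sum_ite_eq' _ (ex L a b Sd d) (fun u => L - u),
    if_pos (Finset.mem_insert_self _ _),
    Finset.sum_insert_of_eq_zero_if_notMem (fun hx => by rw [hd _ hx]; simp)]
  have hr : er L a b Sd d * L = b - a - eC L Sd d := by
    unfold er
    field_simp
  have hx : ex L a b Sd d = (er L a b Sd d - es L a b Sd d + 1) * L := rfl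
  rw [hx]
  unfold eC at hr
  linear_combination hr

lemma eg_pw {L a b : ℝ} {Sd : Finset ℝ} {d : ℝ → ℤ} (hL : 0 < L)
    (hSd : ∀ u ∈ Sd, 0 < u ∧ u < L) : PWAffineZ (eg L a b Sd d) L := by
  refine pwl_pwaffine _ _ _ _ hL fun u hu => ?_
  rcases Finset.mem_insert.1 hu with rfl | hu'
  · exact ⟨(ex_mem L a b Sd d hL).1, (ex_mem L a b Sd d hL).2⟩
  · exact ⟨(hSd u hu').1, (hSd u hu').2.le⟩

lemma eg_coeff {L a b : ℝ} {Sd : Finset ℝ} {d : ℝ → ℤ} (hd : ∀ u, u ∉ Sd → d u = 0)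
    {t : ℝ} {c : ℤ} (h : ∃ n, OrdAt (eg L a b Sd d) t n ∧ c = d t + n) :
    c = if t = ex L a b Sd d then 1 else 0 := by
  classical
  obtain ⟨n, hn, hc⟩ := h
  have h0 := pwl_ordAt a (es L a b Sd d) (insert (ex L a b Sd d) Sd) (ew (ex L a b Sd d) d) t
  have hn0 : n = -(if t ∈ insert (ex L a b Sd d) Sd then ew (ex L a b Sd d) d t else 0) :=
    ordAt_unique hn h0
  subst hc
  rw [hn0]
  by_cases ht : t ∈ insert (ex L a b Sd d) Sd
  · rw [if_pos ht]
    unfold ew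
    split_ifs <;> ring
  · rw [if_neg ht]
    have h1 : t ∉ Sd := fun h' => ht (Finset.mem_insert_of_mem h')
    have h2 : t ≠ ex L a b Sd d := fun h' => ht (by rw [h']; exact Finset.mem_insert_self _ _)
    rw [hd t h1, if_neg h2]
    ring

lemma pwl_congr {A : ℝ} {σ : ℤ} {S₁ S₂ : Finset ℝ} {w₁ w₂ : ℝ → ℤ} (L : ℝ) {y : ℝ}
    (h1 : ∀ u ∈ S₁, u ≤ L) (h2 : ∀ u ∈ S₂, u ≤ L)
    (hw : ∀ u, u < L → (if u ∈ S₁ then w₁ u else 0) = (if u ∈ S₂ then w₂ u else 0))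
    (hy : y ≤ L) : pwl A σ S₁ w₁ y = pwl A σ S₂ w₂ y := by
  classical
  unfold pwl
  congr 1
  have e : ∀ (S : Finset ℝ) (w : ℝ → ℤ), S ⊆ S₁ ∪ S₂ →
      ∑ u ∈ S, (w u : ℝ) * max (y - u) 0
        = ∑ u ∈ S₁ ∪ S₂, ((if u ∈ S then w u else 0 : ℤ) : ℝ) * max (y - u) 0 := by
    intro S w hsub
    calc ∑ u ∈ S, (w u : ℝ) * max (y - u) 0
        = ∑ u ∈ S, ((if u ∈ S then w u else 0 : ℤ) : ℝ) * max (y - u) 0 :=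
          Finset.sum_congr rfl fun u hu => by rw [if_pos hu]
      _ = ∑ u ∈ S₁ ∪ S₂, ((if u ∈ S then w u else 0 : ℤ) : ℝ) * max (y - u) 0 :=
          Finset.sum_subset hsub (fun u _ hu => by rw [if_neg hu]; simp)
  rw [e S₁ w₁ Finset.subset_union_left, e S₂ w₂ Finset.subset_union_right]
  refine Finset.sum_congr rfl fun u hu => ?_
  rcases lt_or_ge u L with h | h
  · rw [hw u h]
  · have huL : u ≤ L := by
      rcases Finset.mem_union.1 hu with h' | h'
      · exact h1 u h'
      · exact h2 u h'
    have hu' : u = L := le_antisymm huL h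
    rw [max_eq_right (by linarith)]
    ring

end OneEdge

/-! ### Uniqueness on one edge -/

lemma oned_unique (L a b : ℝ) (d : ℝ → ℤ) (Sd : Finset ℝ) (hL : 0 < L)
    (hSd : ∀ u ∈ Sd, 0 < u ∧ u < L) (hd : ∀ u, u ∉ Sd → d u = 0)
    (h : ℝ → ℝ) (hpw : PWAffineZ h L) (h0 : h 0 = a) (hLb : h L = b)
    (hadm : ∀ t₁ t₂, t₁ ∈ Set.Ioo 0 L → t₂ ∈ Set.Ioo 0 L →
      ∀ c₁ c₂ : ℤ, (∃ n, OrdAt h t₁ n ∧ c₁ = d t₁ + n) →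
        (∃ n, OrdAt h t₂ n ∧ c₂ = d t₂ + n) →
        c₁ ≠ 0 → c₂ ≠ 0 → t₁ = t₂ ∧ c₁ = 1) :
    ∀ y ∈ Set.Icc 0 L, h y = eg L a b Sd d y := by
  classical
  obtain ⟨m, t, sl, hm, ht0, htm, hmono, haff⟩ := hpw
  have hmono' : ∀ i j, i ≤ j → j ≤ m → t i ≤ t j := by
    intro i j hij hj
    rcases eq_or_lt_of_le hij with rfl | h'
    · exact le_rfl
    · exact (hmono i j h' hj).le
  have tinj : ∀ i j, i ≤ m → j ≤ m → t i = t j → i = j := by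
    intro i j hi hj hij
    rcases lt_trichotomy i j with h' | h' | h'
    · exact absurd hij (ne_of_lt (hmono i j h' hj))
    · exact h'
    · exact absurd hij.symm (ne_of_lt (hmono j i h' hi))
  have hleft : ∀ k, 0 < k → k ≤ m → HasLeftSlope h (t k) (sl (k-1)) := by
    intro k hk hkm
    have hk1 : k - 1 < m := by omega
    have hk1' : k - 1 + 1 = k := by omega
    have hlt : t (k-1) < t k := hmono (k-1) k (by omega) hkm
    refine ⟨t k - t (k-1), by linarith, fun y hy => ?_⟩
    have hy1 : t (k-1) ≤ y := by
      have := hy.1; linarith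
    have hy2 : y ≤ t (k - 1 + 1) := by rw [hk1']; exact hy.2.le
    have e1 := haff (k-1) hk1 y hy1 hy2
    have e2 := haff (k-1) hk1 (t k) hlt.le (by rw [hk1'])
    linear_combination e1 - e2
  have hright : ∀ k, k < m → HasRightSlope h (t k) (sl k) := by
    intro k hk
    have hlt : t k < t (k+1) := hmono k (k+1) (by omega) (by omega)
    refine ⟨t (k+1) - t k, by linarith, fun y hy => ?_⟩
    exact haff k hk y hy.1.le (by have := hy.2; linarith)
  have hinterior : ∀ k, k < m → ∀ u, t k < u → u < t (k+1) → OrdAt h u 0 := by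
    intro k hk u h1 h2
    refine ⟨sl k, sl k, ?_, ?_, by ring⟩
    · refine ⟨u - t k, by linarith, fun y hy => ?_⟩
      have e1 := haff k hk y (by have := hy.1; linarith) (by have := hy.2; linarith)
      have e2 := haff k hk u h1.le h2.le
      linear_combination e1 - e2
    · refine ⟨t (k+1) - u, by linarith, fun y hy => ?_⟩
      have e1 := haff k hk y (by have := hy.1; linarith) (by have := hy.2; linarith)
      have e2 := haff k hk u h1.le h2.le
      linear_combination e1 - e2
  set J : ℝ → ℤ := fun u =>
    if hk : ∃ k, 0 < k ∧ k < m ∧ t k = u then sl (hk.choose - 1) - sl hk.choose else 0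
    with hJdef
  have hJval : ∀ k, 0 < k → k < m → J (t k) = sl (k-1) - sl k := by
    intro k h1 h2
    have hk : ∃ k', 0 < k' ∧ k' < m ∧ t k' = t k := ⟨k, h1, h2, rfl⟩
    simp only [hJdef]
    rw [dif_pos hk]
    have hspec := hk.choose_spec
    have heq : hk.choose = k := tinj _ _ hspec.2.1.le h2.le hspec.2.2
    rw [heq]
  have hJzero : ∀ u, (¬ ∃ k, 0 < k ∧ k < m ∧ t k = u) → J u = 0 := by
    intro u hu
    simp only [hJdef]
    rw [dif_neg hu]
  have hJ_ord : ∀ u, u ∈ Set.Ioo 0 L → OrdAt h u (J u) := by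
    intro u hu
    by_cases hk : ∃ k, 0 < k ∧ k < m ∧ t k = u
    · obtain ⟨k, h1, h2, h3⟩ := hk
      rw [← h3, hJval k h1 h2]
      exact ⟨sl (k-1), sl k, hleft k h1 h2.le, hright k h2, rfl⟩
    · rw [hJzero u hk]
      have hP0 : t 0 < u := by rw [ht0]; exact hu.1
      have hile : Nat.findGreatest (fun i => t i < u) m ≤ m := Nat.findGreatest_le m
      have hPi : t (Nat.findGreatest (fun i => t i < u) m) < u :=
        Nat.findGreatest_spec (P := fun i => t i < u) (Nat.zero_le m) hP0
      have hiltm : Nat.findGreatest (fun i => t i < u) m < m := by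
        rcases eq_or_lt_of_le hile with h' | h'
        · exfalso
          rw [h', htm] at hPi
          exact absurd hu.2 (not_lt.2 hPi.le)
        · exact h'
      have hui : u < t (Nat.findGreatest (fun i => t i < u) m + 1) := by
        rcases lt_trichotomy u (t (Nat.findGreatest (fun i => t i < u) m + 1)) with h' | h' | h'
        · exact h'
        · exfalso
          rcases eq_or_lt_of_le (show Nat.findGreatest (fun i => t i < u) m + 1 ≤ m by omega)
            with he | hlt2
          · rw [he, htm] at h'
            exact absurd h' (ne_of_lt hu.2)
          · exact hk ⟨Nat.findGreatest (fun i => t i < u) m + 1, by omega, hlt2, h'.symm⟩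
        · exfalso
          have := Nat.le_findGreatest (P := fun i => t i < u)
            (show Nat.findGreatest (fun i => t i < u) m + 1 ≤ m by omega) h'
          omega
      exact hinterior _ hiltm u hPi hui
  have hJsupp : ∀ u, J u ≠ 0 → ∃ k, 0 < k ∧ k < m ∧ t k = u := by
    intro u hu
    by_contra hk
    exact hu (hJzero u hk)
  set SS : Finset ℝ := (Finset.Icc 1 (m-1)).image t with hSS
  have hSSIoo : ∀ u ∈ SS, 0 < u ∧ u < L := by
    intro u hu
    obtain ⟨k, hk, rfl⟩ := Finset.mem_image.1 hu
    rw [Finset.mem_Icc] at hk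
    constructor
    · rw [← ht0]; exact hmono 0 k (by omega) (by omega)
    · rw [← htm]; exact hmono k m (by omega) le_rfl
  have hJSS : ∀ u, u ∉ SS → J u = 0 := by
    intro u hu
    by_contra h'
    obtain ⟨k, h1, h2, h3⟩ := hJsupp u h'
    exact hu (Finset.mem_image.2 ⟨k, Finset.mem_Icc.2 ⟨by omega, by omega⟩, h3⟩)
  set Φ := pwl (h 0) (sl 0) SS (fun u => - J u) with hΦ
  have key : ∀ i, i ≤ m → ∀ y, 0 ≤ y → y ≤ t i → h y = Φ y := by
    intro i
    induction i with
    | zero =>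
      intro _ y h1 h2
      rw [ht0] at h2
      have hy0 : y = 0 := le_antisymm h2 h1
      subst hy0
      rw [hΦ]
      unfold pwl
      rw [Finset.sum_eq_zero fun u hu => by
        rw [max_eq_right (by linarith [(hSSIoo u hu).1]), mul_zero]]
      simp
    | succ i ih =>
      intro hi1 y h1 h2
      have him : i < m := by omega
      rcases le_or_gt y (t i) with h' | h'
      · exact ih (by omega) y h1 h'
      · have e1 := haff i him y h'.le h2
        have hcond : ∀ u ∈ SS, u ≤ t i ∨ y ≤ u := by
          intro u hu
          obtain ⟨k, hk, rfl⟩ := Finset.mem_image.1 hu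
          rw [Finset.mem_Icc] at hk
          rcases le_or_gt k i with hki | hki
          · exact Or.inl (hmono' k i hki (by omega))
          · exact Or.inr (le_trans h2 (hmono' (i+1) k hki (by omega)))
        have e2 := pwl_eval_right (h 0) (sl 0) SS (fun u => - J u) h'.le hcond
        rw [← hΦ] at e2
        have e3 : ∑ u ∈ SS.filter (fun u => u ≤ t i), (- J u) = sl i - sl 0 := by
          have himg : SS.filter (fun u => u ≤ t i) = (Finset.Icc 1 i).image t := by
            rw [hSS]
            ext u
            simp only [Finset.mem_filter, Finset.mem_image, Finset.mem_Icc]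
            constructor
            · rintro ⟨⟨k, hk, rfl⟩, hle⟩
              refine ⟨k, ⟨hk.1, ?_⟩, rfl⟩
              by_contra hik
              have : t i < t k := hmono i k (by omega) (by omega)
              linarith
            · rintro ⟨k, hk, rfl⟩
              exact ⟨⟨k, ⟨hk.1, by omega⟩, rfl⟩, hmono' k i hk.2 (by omega)⟩
          rw [himg, Finset.sum_image (by
            intro k hk k' hk' hkk'
            rw [Finset.mem_coe, Finset.mem_Icc] at hk hk'
            exact tinj k k' (by omega) (by omega) hkk')]
          have hterm : ∀ k ∈ Finset.Icc 1 i, - J (t k) = sl k - sl (k-1) := by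
            intro k hk
            rw [Finset.mem_Icc] at hk
            rw [hJval k (by omega) (by omega)]
            ring
          rw [Finset.sum_congr rfl hterm]
          have htel := Finset.sum_range_sub (fun k => sl k) i
          rw [← htel, ← Finset.Ico_add_one_right_eq_Icc, Finset.sum_Ico_eq_sum_range]
          refine Finset.sum_congr (by congr 1 <;> omega) fun j _ => ?_
          have hj1 : 1 + j = j + 1 := Nat.add_comm 1 j
          rw [hj1, Nat.add_sub_cancel]
        have e4 : ((sl 0 + ∑ u ∈ SS.filter (fun u => u ≤ t i), (- J u) : ℤ) : ℝ)
            = (sl i : ℝ) := by rw [e3]; push_cast; ring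
        have hΦti : Φ (t i) = h (t i) :=
          (ih (by omega) (t i) (by rw [← ht0]; exact hmono' 0 i (by omega) (by omega)) le_rfl).symm
        rw [e2, e4, hΦti]
        exact e1
  have hhΦ : ∀ y, 0 ≤ y → y ≤ L → h y = Φ y := fun y h1 h2 =>
    key m le_rfl y h1 (by rw [htm]; exact h2)
  have hΦL : Φ L = b := by rw [← hhΦ L hL.le le_rfl]; exact hLb
  set c : ℝ → ℤ := fun u => d u + J u with hc
  have hcIoo : ∀ u, c u ≠ 0 → u ∈ Set.Ioo 0 L := by
    intro u hu
    by_cases h1 : u ∈ Sd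
    · exact Set.mem_Ioo.2 ⟨(hSd u h1).1, (hSd u h1).2⟩
    · by_cases h2 : u ∈ SS
      · exact Set.mem_Ioo.2 ⟨(hSSIoo u h2).1, (hSSIoo u h2).2⟩
      · exact absurd (by simp only [hc]; rw [hd u h1, hJSS u h2]; ring) hu
  have hcoeff : ∀ u, u ∈ Set.Ioo 0 L → (∃ n, OrdAt h u n ∧ c u = d u + n) :=
    fun u hu => ⟨J u, hJ_ord u hu, by simp only [hc]⟩
  have hΦLval : Φ L = h 0 + (sl 0 : ℝ) * L + ∑ u ∈ SS, ((- J u : ℤ) : ℝ) * (L - u) := by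
    rw [hΦ]
    unfold pwl
    congr 1
    exact Finset.sum_congr rfl fun u hu => by
      rw [max_eq_left (by linarith [(hSSIoo u hu).2])]
  have hsum1 : ∑ u ∈ SS, ((- J u : ℤ) : ℝ) * (L - u)
      = eC L Sd d - ∑ u ∈ SS ∪ Sd, (c u : ℝ) * (L - u) := by
    have e1 : ∑ u ∈ SS, ((- J u : ℤ) : ℝ) * (L - u)
        = ∑ u ∈ SS ∪ Sd, ((d u - c u : ℤ) : ℝ) * (L - u) := by
      calc ∑ u ∈ SS, ((- J u : ℤ) : ℝ) * (L - u)
          = ∑ u ∈ SS, ((d u - c u : ℤ) : ℝ) * (L - u) :=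
            Finset.sum_congr rfl fun u _ => by simp only [hc]; push_cast; ring
        _ = ∑ u ∈ SS ∪ Sd, ((d u - c u : ℤ) : ℝ) * (L - u) :=
            Finset.sum_subset Finset.subset_union_left (fun u _ hu => by
              simp only [hc]
              rw [hJSS u hu]
              push_cast
              ring)
    rw [e1]
    have e2 : ∑ u ∈ SS ∪ Sd, ((d u - c u : ℤ) : ℝ) * (L - u)
        = ∑ u ∈ SS ∪ Sd, ((d u : ℝ) * (L - u) - (c u : ℝ) * (L - u)) :=
      Finset.sum_congr rfl fun u _ => by push_cast; ring
    rw [e2, Finset.sum_sub_distrib]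
    congr 1
    unfold eC
    exact (Finset.sum_subset Finset.subset_union_right (fun u _ hu => by
      rw [hd u hu]; simp)).symm
  by_cases hcz : ∀ u, c u = 0
  · have hKsum : ∑ u ∈ SS ∪ Sd, (c u : ℝ) * (L - u) = 0 :=
      Finset.sum_eq_zero fun u _ => by rw [hcz u]; simp
    have hb : b = a + (sl 0 : ℝ) * L + eC L Sd d := by
      rw [← hΦL, hΦLval, hsum1, hKsum, h0]; ring
    have her : er L a b Sd d = (sl 0 : ℝ) := by
      unfold er
      rw [hb]
      field_simp
      ring
    have hes : es L a b Sd d = sl 0 := by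
      unfold es
      rw [her]
      exact Int.ceil_intCast _
    have hex : ex L a b Sd d = L := by
      unfold ex
      rw [her, hes]
      push_cast
      ring
    intro y hy
    rw [hhΦ y hy.1 hy.2, hΦ]
    unfold eg
    rw [hex, h0, hes]
    refine pwl_congr L (fun u hu => (hSSIoo u hu).2.le) ?_ ?_ hy.2
    · intro u hu
      rcases Finset.mem_insert.1 hu with rfl | hu'
      · exact le_rfl
      · exact (hSd u hu').2.le
    · intro u huL
      have hcu : d u + J u = 0 := by
        have := hcz u
        simpa only [hc] using this
      by_cases h1 : u ∈ SS
      · rw [if_pos h1]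
        by_cases h3 : u ∈ insert L Sd
        · rw [if_pos h3]
          unfold ew
          rw [if_neg (ne_of_lt huL)]
          omega
        · rw [if_neg h3]
          have h4 : u ∉ Sd := fun h' => h3 (Finset.mem_insert_of_mem h')
          have h5 := hd u h4
          omega
      · rw [if_neg h1]
        have hJ0 : J u = 0 := hJSS u h1
        by_cases h3 : u ∈ insert L Sd
        · rw [if_pos h3]
          unfold ew
          rw [if_neg (ne_of_lt huL)]
          omega
        · rw [if_neg h3]
  · push_neg at hcz
    obtain ⟨x', hx'⟩ := hcz
    have hx'I : x' ∈ Set.Ioo 0 L := hcIoo x' hx'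
    have hcx1 : c x' = 1 :=
      (hadm x' x' hx'I hx'I (c x') (c x') (hcoeff x' hx'I) (hcoeff x' hx'I) hx' hx').2
    have hconly : ∀ u, u ≠ x' → c u = 0 := by
      intro u hu
      by_contra h'
      exact hu ((hadm u x' (hcIoo u h') hx'I (c u) (c x') (hcoeff u (hcIoo u h'))
        (hcoeff x' hx'I) h' hx').1)
    have hcval : ∀ u, c u = if u = x' then 1 else 0 := by
      intro u
      by_cases h' : u = x'
      · rw [if_pos h', h']; exact hcx1
      · rw [if_neg h']; exact hconly u h'
    have hx'U : x' ∈ SS ∪ Sd := by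
      by_cases h1 : x' ∈ Sd
      · exact Finset.mem_union_right _ h1
      · by_cases h2 : x' ∈ SS
        · exact Finset.mem_union_left _ h2
        · exact absurd (by simp only [hc]; rw [hd x' h1, hJSS x' h2]; ring) hx'
    have hKsum : ∑ u ∈ SS ∪ Sd, (c u : ℝ) * (L - u) = L - x' := by
      have hterm : ∀ u ∈ SS ∪ Sd, (c u : ℝ) * (L - u) = if u = x' then (L - u) else 0 := by
        intro u _
        rw [hcval u]
        split_ifs <;> simp
      rw [Finset.sum_congr rfl hterm, Finset.sum_ite_eq' (SS ∪ Sd) x' (fun u => L - u),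
        if_pos hx'U]
    have hb : b = a + (sl 0 : ℝ) * L + eC L Sd d - (L - x') := by
      rw [← hΦL, hΦLval, hsum1, hKsum, h0]; ring
    have hL' : (L : ℝ) ≠ 0 := ne_of_gt hL
    have herL : er L a b Sd d * L = (sl 0 : ℝ) * L - (L - x') := by
      unfold er
      rw [div_mul_cancel₀ _ hL', hb]
      ring
    have hlt1 : er L a b Sd d < (sl 0 : ℝ) := by
      have hkey : er L a b Sd d * L < (sl 0 : ℝ) * L := by
        rw [herL]; linarith [hx'I.2]
      exact lt_of_mul_lt_mul_right hkey hL.le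
    have hgt1 : (sl 0 : ℝ) - 1 < er L a b Sd d := by
      have hkey : ((sl 0 : ℝ) - 1) * L < er L a b Sd d * L := by
        rw [herL]; nlinarith [hx'I.1]
      exact lt_of_mul_lt_mul_right hkey hL.le
    have hes : es L a b Sd d = sl 0 := by
      have hle : es L a b Sd d ≤ sl 0 := Int.ceil_le.2 hlt1.le
      have hge : (sl 0 - 1 : ℤ) < es L a b Sd d := by
        have := lt_of_lt_of_le hgt1 (Int.le_ceil (er L a b Sd d))
        exact_mod_cast (by push_cast; exact this : ((sl 0 - 1 : ℤ) : ℝ) < (es L a b Sd d : ℝ))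
      omega
    have hex : ex L a b Sd d = x' := by
      unfold ex
      rw [hes]
      linear_combination herL
    intro y hy
    rw [hhΦ y hy.1 hy.2, hΦ]
    unfold eg
    rw [hex, h0, hes]
    refine pwl_congr L (fun u hu => (hSSIoo u hu).2.le) ?_ ?_ hy.2
    · intro u hu
      rcases Finset.mem_insert.1 hu with rfl | hu'
      · exact hx'I.2.le
      · exact (hSd u hu').2.le
    · intro u _
      have hcu : c u = d u + J u := by simp only [hc]
      have hcu' := hcval u
      by_cases h1 : u ∈ SS
      · rw [if_pos h1]
        by_cases h3 : u ∈ insert x' Sd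
        · rw [if_pos h3]
          unfold ew
          rw [← hcu']
          omega
        · rw [if_neg h3]
          have h4 : u ∉ Sd := fun h' => h3 (Finset.mem_insert_of_mem h')
          have h5 : u ≠ x' := fun h' => h3 (by rw [h']; exact Finset.mem_insert_self _ _)
          have h6 := hd u h4
          rw [if_neg h5] at hcu'
          omega
      · rw [if_neg h1]
        have hJ0 : J u = 0 := hJSS u h1
        by_cases h3 : u ∈ insert x' Sd
        · rw [if_pos h3]
          unfold ew
          rw [← hcu']
          omega
        · rw [if_neg h3]

/-- For every divisor `D` on `Γ` and every `f : V → ℝ` there is a unique rational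
function `f̂` on `Γ` extending `f` such that `D + div(f̂)` is `G`-admissible.
(Uniqueness is up to the values on the points of `Γ`, i.e. on `[0, ℓ e]` for each edge.) -/
theorem admissible_extension_exists_unique
    (Γ : MetricGraph) (D : Divisor Γ) (f : Γ.V → ℝ) :
    ∃ fhat : RatFn Γ, fhat.vtx = f ∧ AdmissibleSum D fhat ∧
      ∀ g : RatFn Γ, g.vtx = f → AdmissibleSum D g →
        ∀ e, ∀ t ∈ Set.Icc 0 (Γ.len e), g.edge e t = fhat.edge e t := by
  classical
  have hSd : ∀ e, ∀ u ∈ (D.finite_supp e).toFinset, 0 < u ∧ u < Γ.len e := by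
    intro e u hu
    have hmem : D.inter e u ≠ 0 := by
      have := (D.finite_supp e).mem_toFinset.1 hu
      exact this
    have := D.supp_mem e u hmem
    exact ⟨this.1, this.2⟩
  have hd : ∀ e u, u ∉ (D.finite_supp e).toFinset → D.inter e u = 0 := by
    intro e u hu
    by_contra h'
    exact hu ((D.finite_supp e).mem_toFinset.2 h')
  refine ⟨⟨f, fun e => eg (Γ.len e) (f (Γ.src e)) (f (Γ.tgt e))
      (D.finite_supp e).toFinset (D.inter e),
      fun e => eg_zero (Γ.len_pos e) (hSd e),
      fun e => eg_len (Γ.len_pos e) (hSd e) (hd e),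
      fun e => eg_pw (Γ.len_pos e) (hSd e)⟩, rfl, ?_, ?_⟩
  · intro e t₁ t₂ ht₁ ht₂ c₁ c₂ h₁ h₂ hc₁ hc₂
    have e₁ : c₁ = if t₁ = ex (Γ.len e) (f (Γ.src e)) (f (Γ.tgt e))
        (D.finite_supp e).toFinset (D.inter e) then 1 else 0 := eg_coeff (hd e) h₁
    have e₂ : c₂ = if t₂ = ex (Γ.len e) (f (Γ.src e)) (f (Γ.tgt e))
        (D.finite_supp e).toFinset (D.inter e) then 1 else 0 := eg_coeff (hd e) h₂
    have hx₁ : t₁ = ex (Γ.len e) (f (Γ.src e)) (f (Γ.tgt e))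
        (D.finite_supp e).toFinset (D.inter e) := by
      by_contra h'
      rw [if_neg h'] at e₁
      exact hc₁ e₁
    have hx₂ : t₂ = ex (Γ.len e) (f (Γ.src e)) (f (Γ.tgt e))
        (D.finite_supp e).toFinset (D.inter e) := by
      by_contra h'
      rw [if_neg h'] at e₂
      exact hc₂ e₂
    exact ⟨hx₁.trans hx₂.symm, by rw [e₁, if_pos hx₁]⟩
  · intro g hg hadm e y hy
    exact oned_unique (Γ.len e) (f (Γ.src e)) (f (Γ.tgt e)) (D.inter e)
      (D.finite_supp e).toFinset (Γ.len_pos e) (hSd e) (hd e) (g.edge e) (g.pw e)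
      (by rw [g.edge_src e, hg]) (by rw [g.edge_tgt e, hg]) (hadm e) y hy
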